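/- arXiv:1710.02058 — 4 statements merged into one kernel-verified Lean document; each statement's English description precedes it below -/
import Mathlib

section
/- Let d ≥ 1, let X be a finite set of points in ℝ^d (functions Fin d → ℝ), and let p ∈ X. Let D = {q ∈ X : q_i ≥ p_i for all i} (note p ∈ D), and let p* be the lexicographically maximal element of D, i.e. p* ∈ D and every q ∈ D with q ≠ p* satisfies q <_lex p*. Then: (a) no point of X strictly dominates p*, i.e. p* belongs to the skyline of X; and (b) for every subset S ⊆ X such that no element of S dominates p (i.e. no s ∈ S has s_i ≥ p_i for all i), we have p* ∉ S. Hence p* is a skyline point not already in S. -/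
/-- `q` dominates `p` if `q` is at least `p` in every coordinate. -/
def Dominates {d : ℕ} (q p : Fin d → ℝ) : Prop :=
  ∀ i, p i ≤ q i

/-- `q` strictly dominates `p` if `q` is at least `p` in every coordinate and
strictly larger in at least one coordinate. -/
def StrictlyDominates {d : ℕ} (q p : Fin d → ℝ) : Prop :=
  (∀ i, p i ≤ q i) ∧ ∃ i, p i < q i

/-- The skyline of a set of points: those points not strictly dominated by any
other point of the set. -/
def skyline {d : ℕ} (X : Set (Fin d → ℝ)) : Set (Fin d → ℝ) :=
  {p ∈ X | ∀ q ∈ X, ¬ StrictlyDominates q p}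

/-- Lexicographic (strict) order on points: `q <_lex p` iff at the first
coordinate where they differ, `q` is smaller. -/
def LexLt {d : ℕ} (q p : Fin d → ℝ) : Prop :=
  ∃ i, q i < p i ∧ ∀ j, j < i → q j = p j

/-- Correctness core of `SkylineHighDim`: if `p*` is the lexicographically
maximal point among those points of `X` dominating `p`, then `p*` is a skyline
point of `X`, and `p*` lies in no set `S ⊆ X` none of whose elements
dominates `p`. -/
theorem maxlex_is_new_skyline_point
    (d : ℕ) (hd : 1 ≤ d) (X : Set (Fin d → ℝ)) (hX : X.Finite)
    (p : Fin d → ℝ) (hp : p ∈ X)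
    (D : Set (Fin d → ℝ)) (hD : D = {q ∈ X | Dominates q p})
    (pstar : Fin d → ℝ) (hpstarD : pstar ∈ D)
    (hmax : ∀ q ∈ D, q ≠ pstar → LexLt q pstar) :
    pstar ∈ skyline X ∧
      ∀ S ⊆ X, (∀ s ∈ S, ¬ Dominates s p) → pstar ∉ S := by
  subst hD
  obtain ⟨hpX, hpdom⟩ := hpstarD
  constructor
  · refine ⟨hpX, fun q hqX hsd => ?_⟩
    obtain ⟨hge, i, hlt⟩ := hsd
    have hqD : q ∈ {q ∈ X | Dominates q p} :=
      ⟨hqX, fun j => le_trans (hpdom j) (hge j)⟩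
    have hqne : q ≠ pstar := by
      intro h; subst h; exact lt_irrefl _ hlt
    obtain ⟨j, hj, _⟩ := hmax q hqD hqne
    exact absurd (hge j) (not_le.mpr hj)
  · intro S hS hnd hpin
    exact hnd pstar hpin hpdom
end

section
/- Let d ≥ 1 be a real number, δ a real with 0 < δ ≤ 1/2, and K a real number with K ≥ d/δ. For i ∈ ℕ set k_i = (d/δ)^{2^i}, and set γ = log₂(log_{d/δ} K). Then for every natural number Z, ∑_{i=1}^{⌈γ⌉+1+Z} log₂(2^i · d · k_i / δ) ≤ 32 · 2^Z · log₂ K. -/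
lemma guessSkyline_nat_sum_bound (N : ℕ) :
    ∑ i ∈ Finset.Icc 1 N, (i + 2 ^ i + 1) ≤ 2 ^ (N + 2) := by
  induction N with
  | zero => simp
  | succ n ih =>
    rw [Finset.sum_Icc_succ_top (by omega)]
    have h1 : n + 1 < 2 ^ (n + 1) := Nat.lt_two_pow_self
    have : (n + 1) + 2 ^ (n + 1) + 1 ≤ 2 ^ (n + 2) := by
      have : 2 ^ (n + 2) = 2 ^ (n + 1) + 2 ^ (n + 1) := by ring
      omega
    calc ∑ i ∈ Finset.Icc 1 n, (i + 2 ^ i + 1) + ((n + 1) + 2 ^ (n + 1) + 1)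
        ≤ 2 ^ (n + 2) + 2 ^ (n + 2) := by omega
      _ = 2 ^ (n + 1 + 2) := by ring

/-- Summation bound for the doubling procedure `GuessSkyline`: with
`k_i = (d/δ)^(2^i)` and `γ = log₂(log_{d/δ} K)`, for every number `Z` of extra
iterations, `∑_{i=1}^{⌈γ⌉+1+Z} log₂(2^i · d · k_i / δ) ≤ 32 · 2^Z · log₂ K`. -/
theorem guessSkyline_sum_bound
    (d δ K : ℝ) (hd : 1 ≤ d) (hδ0 : 0 < δ) (hδ : δ ≤ 1 / 2)
    (hK : d / δ ≤ K) (Z : ℕ) :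
    ∑ i ∈ Finset.Icc 1 (⌈Real.logb 2 (Real.logb (d / δ) K)⌉₊ + 1 + Z),
        Real.logb 2 ((2 : ℝ) ^ i * d * (d / δ) ^ (2 ^ i) / δ) ≤
      32 * (2 : ℝ) ^ Z * Real.logb 2 K := by
  set c : ℝ := d / δ with hc_def
  have hc2 : (2 : ℝ) ≤ c := by
    rw [hc_def, le_div_iff₀ hδ0]
    nlinarith
  have hc1 : (1 : ℝ) < c := by linarith
  have hc0 : (0 : ℝ) < c := by linarith
  set L : ℝ := Real.logb 2 c with hL_def
  have hL1 : (1 : ℝ) ≤ L := by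
    have h := Real.logb_le_logb_of_le one_lt_two (by norm_num) hc2
    rwa [Real.logb_self_eq_one one_lt_two] at h
  set M : ℝ := Real.logb c K with hM_def
  have hM1 : (1 : ℝ) ≤ M := by
    have h := Real.logb_le_logb_of_le hc1 hc0 hK
    rwa [Real.logb_self_eq_one hc1] at h
  set γ : ℝ := Real.logb 2 M with hγ_def
  have hγ0 : 0 ≤ γ := Real.logb_nonneg one_lt_two hM1
  set N : ℕ := ⌈γ⌉₊ + 1 + Z with hN_def
  -- rewrite each term
  have hterm : ∀ i ∈ Finset.Icc 1 N,
      Real.logb 2 ((2 : ℝ) ^ i * d * c ^ (2 ^ i) / δ) = i + (2 ^ i + 1) * L := by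
    intro i _
    have harg : (2 : ℝ) ^ i * d * c ^ (2 ^ i) / δ = 2 ^ i * c ^ (2 ^ i + 1) := by
      rw [hc_def, div_pow, div_pow, pow_succ]
      field_simp
      ring
    rw [harg, Real.logb_mul (by positivity) (by positivity),
      Real.logb_pow, Real.logb_pow, Real.logb_self_eq_one one_lt_two]
    push_cast
    ring
  rw [Finset.sum_congr rfl hterm]
  -- bound sum by L * 2^(N+2)
  have hstep : ∀ i ∈ Finset.Icc 1 N,
      (i : ℝ) + (2 ^ i + 1) * L ≤ L * ((i : ℝ) + 2 ^ i + 1) := by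
    intro i _
    have hi : (0 : ℝ) ≤ i := Nat.cast_nonneg i
    nlinarith
  have hsum2 : ∑ i ∈ Finset.Icc 1 N, ((i : ℝ) + 2 ^ i + 1) ≤ 2 ^ (N + 2) := by
    have := guessSkyline_nat_sum_bound N
    calc ∑ i ∈ Finset.Icc 1 N, ((i : ℝ) + 2 ^ i + 1)
        = ((∑ i ∈ Finset.Icc 1 N, (i + 2 ^ i + 1) : ℕ) : ℝ) := by
          push_cast
          exact Finset.sum_congr rfl fun i _ => by ring
      _ ≤ ((2 ^ (N + 2) : ℕ) : ℝ) := by exact_mod_cast this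
      _ = 2 ^ (N + 2) := by push_cast; ring
  have hL0 : 0 < L := by linarith
  have hM0 : 0 < M := by linarith
  have h1 : ∑ i ∈ Finset.Icc 1 N, ((i : ℝ) + (2 ^ i + 1) * L) ≤ L * 2 ^ (N + 2) := by
    calc ∑ i ∈ Finset.Icc 1 N, ((i : ℝ) + (2 ^ i + 1) * L)
        ≤ ∑ i ∈ Finset.Icc 1 N, L * ((i : ℝ) + 2 ^ i + 1) := Finset.sum_le_sum hstep
      _ = L * ∑ i ∈ Finset.Icc 1 N, ((i : ℝ) + 2 ^ i + 1) := by rw [Finset.mul_sum]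
      _ ≤ L * 2 ^ (N + 2) := by nlinarith
  -- 2^(N+2) ≤ 16 * M * 2^Z
  have hceil : ((⌈γ⌉₊ : ℝ)) ≤ γ + 1 := by
    have := Nat.ceil_lt_add_one hγ0
    linarith
  have hpow : (2 : ℝ) ^ (⌈γ⌉₊ : ℕ) ≤ 2 * M := by
    have h2γ : (2 : ℝ) ^ γ = M := by
      rw [hγ_def]; exact Real.rpow_logb (by norm_num) (by norm_num) hM0
    calc (2 : ℝ) ^ (⌈γ⌉₊ : ℕ) = (2 : ℝ) ^ ((⌈γ⌉₊ : ℕ) : ℝ) := by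
          rw [Real.rpow_natCast]
      _ ≤ (2 : ℝ) ^ (γ + 1) := Real.rpow_le_rpow_of_exponent_le (by norm_num) hceil
      _ = 2 * M := by rw [Real.rpow_add (by norm_num), h2γ, Real.rpow_one]; ring
  have hN2 : (2 : ℝ) ^ (N + 2) ≤ 16 * M * 2 ^ Z := by
    have : (2 : ℝ) ^ (N + 2) = 2 ^ (⌈γ⌉₊ : ℕ) * 2 ^ Z * 8 := by
      rw [hN_def]; ring
    rw [this]
    have hZ0 : (0 : ℝ) < 2 ^ Z := by positivity
    nlinarith
  -- logb 2 K = L * M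
  have hlogK : Real.logb 2 K = L * M := by
    rw [hL_def, hM_def, Real.logb, Real.logb, Real.logb]
    have h2 : Real.log 2 ≠ 0 := by
      exact Real.log_ne_zero_of_pos_of_ne_one (by norm_num) (by norm_num)
    have hcl : Real.log c ≠ 0 := by
      exact Real.log_ne_zero_of_pos_of_ne_one hc0 (by linarith)
    field_simp
  rw [hlogK]
  calc ∑ i ∈ Finset.Icc 1 N, ((i : ℝ) + (2 ^ i + 1) * L)
      ≤ L * 2 ^ (N + 2) := h1
    _ ≤ L * (16 * M * 2 ^ Z) := by nlinarith
    _ ≤ 32 * 2 ^ Z * (L * M) := by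
        have hZ0 : (0 : ℝ) < 2 ^ Z := by positivity
        nlinarith [mul_pos (mul_pos hL0 hM0) hZ0]
end

section
/- Let k ≥ 2 be a real number, δ a real with 0 < δ ≤ 1/8, and Z a natural number. Set M = ⌈log₂ k⌉ + 1 + Z. Then ∑_{i=1}^{M} 2^i · log₂(8^i · 2^i / δ) ≤ 96 · 2^Z · k · (Z + log₂(k/δ)). -/
/-- Summation bound for the doubling procedure `GuessSkylineHighDim`
(linear-in-`n` terms): with `M = ⌈log₂ k⌉ + 1 + Z`,
`∑_{i=1}^{M} 2^i · log₂(8^i · 2^i / δ) ≤ 96 · 2^Z · k · (Z + log₂(k/δ))`. -/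
theorem guessSkylineHighDim_sum_bound_linear
    (k δ : ℝ) (hk : 2 ≤ k) (hδ0 : 0 < δ) (hδ : δ ≤ 1 / 8) (Z : ℕ) :
    ∑ i ∈ Finset.Icc 1 (⌈Real.logb 2 k⌉₊ + 1 + Z),
        (2 : ℝ) ^ i * Real.logb 2 ((8 : ℝ) ^ i * (2 : ℝ) ^ i / δ) ≤
      96 * (2 : ℝ) ^ Z * k * ((Z : ℝ) + Real.logb 2 (k / δ)) := by
  have hk0 : (0:ℝ) < k := by linarith
  set m : ℕ := ⌈Real.logb 2 k⌉₊ with hm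
  set M : ℕ := m + 1 + Z with hM
  set lk : ℝ := Real.logb 2 k with hlk
  set L : ℝ := -Real.logb 2 δ with hLdef
  have hb : (1:ℝ) < 2 := one_lt_two
  have hlk1 : 1 ≤ lk := by
    have := (Real.logb_le_logb hb (by norm_num : (0:ℝ) < 2) hk0).mpr hk
    simpa [Real.logb_self_eq_one hb] using this
  have hL3 : 3 ≤ L := by
    have h18 : Real.logb 2 δ ≤ (-3 : ℝ) := by
      rw [Real.logb_le_iff_le_rpow hb hδ0]
      have : (2:ℝ) ^ (-3 : ℝ) = 1/8 := by
        rw [show (-3:ℝ) = ((-3:ℤ):ℝ) by norm_num, Real.rpow_intCast]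
        norm_num
      rw [this]; exact hδ
    simp only [hLdef]; linarith
  -- rewrite logb(k/δ)
  have hdiv : Real.logb 2 (k / δ) = lk + L := by
    rw [Real.logb_div (ne_of_gt hk0) (ne_of_gt hδ0)]; ring
  -- each term equals 2^i * (4i + L)
  have hterm : ∀ i : ℕ, Real.logb 2 ((8:ℝ)^i * (2:ℝ)^i / δ) = 4 * i + L := by
    intro i
    have h8 : ((8:ℝ)^i : ℝ) ≠ 0 := by positivity
    have h2 : ((2:ℝ)^i : ℝ) ≠ 0 := by positivity
    rw [Real.logb_div (by positivity) (ne_of_gt hδ0), Real.logb_mul h8 h2,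
      Real.logb_pow, Real.logb_pow, show (8:ℝ) = 2^(3:ℕ) by norm_num,
      Real.logb_pow, Real.logb_self_eq_one hb]
    push_cast; ring
  -- bound each term by 2^i * (4M + L)
  have hstep : ∑ i ∈ Finset.Icc 1 M, (2:ℝ)^i * Real.logb 2 ((8:ℝ)^i * (2:ℝ)^i / δ)
      ≤ (∑ i ∈ Finset.Icc 1 M, (2:ℝ)^i) * (4 * M + L) := by
    rw [Finset.sum_mul]
    apply Finset.sum_le_sum
    intro i hi
    rw [hterm i]
    have hiM : (i:ℝ) ≤ (M:ℝ) := by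
      exact_mod_cast (Finset.mem_Icc.mp hi).2
    have : (4:ℝ) * i + L ≤ 4 * M + L := by linarith
    exact mul_le_mul_of_nonneg_left this (by positivity)
  -- geometric sum bound
  have hgeom : ∑ i ∈ Finset.Icc 1 M, (2:ℝ)^i ≤ 2^(M+1) := by
    have hsub : Finset.Icc 1 M ⊆ Finset.range (M+1) := by
      intro i hi
      simp only [Finset.mem_range, Nat.lt_succ_iff]
      exact (Finset.mem_Icc.mp hi).2
    calc ∑ i ∈ Finset.Icc 1 M, (2:ℝ)^i
        ≤ ∑ i ∈ Finset.range (M+1), (2:ℝ)^i :=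
          Finset.sum_le_sum_of_subset_of_nonneg hsub (fun i _ _ => by positivity)
      _ = 2^(M+1) - 1 := by
          rw [geom_sum_eq (by norm_num : (2:ℝ) ≠ 1)]; norm_num
      _ ≤ 2^(M+1) := by linarith
  -- bound 2^m ≤ 2k
  have hmlk : (m:ℝ) ≤ lk + 1 := le_of_lt (Nat.ceil_lt_add_one (by linarith))
  have h2m : (2:ℝ)^m ≤ 2 * k := by
    have : (2:ℝ)^(m:ℝ) ≤ (2:ℝ)^(lk + 1 : ℝ) :=
      Real.rpow_le_rpow_of_exponent_le (by norm_num) hmlk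
    rw [Real.rpow_add (by norm_num), Real.rpow_logb (by norm_num) (by norm_num) hk0,
      Real.rpow_one] at this
    calc (2:ℝ)^m = (2:ℝ)^(m:ℝ) := by rw [Real.rpow_natCast]
      _ ≤ k * 2 := this
      _ = 2 * k := by ring
  have h2M : (2:ℝ)^(M+1) ≤ 8 * 2^Z * k := by
    have : (2:ℝ)^(M+1) = (2:ℝ)^m * 4 * 2^Z := by
      rw [hM, pow_succ, pow_add, pow_succ]; ring
    rw [this]
    have h2Z : (0:ℝ) < 2^Z := by positivity
    nlinarith
  -- bound on M as real
  have hMr : (M:ℝ) ≤ lk + 2 + Z := by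
    rw [hM]; push_cast; linarith
  -- combine
  have hkey : (∑ i ∈ Finset.Icc 1 M, (2:ℝ)^i) * (4 * M + L)
      ≤ (8 * 2^Z * k) * (4 * M + L) := by
    apply mul_le_mul_of_nonneg_right (le_trans hgeom h2M)
    have : (0:ℝ) ≤ (M:ℝ) := Nat.cast_nonneg M
    linarith
  have hfin : (8 * (2:ℝ)^Z * k) * (4 * M + L)
      ≤ 96 * 2^Z * k * ((Z:ℝ) + (lk + L)) := by
    have h2Z : (0:ℝ) < (2:ℝ)^Z := by positivity
    have hZ0 : (0:ℝ) ≤ (Z:ℝ) := Nat.cast_nonneg Z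
    have hcoef : 4 * (M:ℝ) + L ≤ 12 * ((Z:ℝ) + (lk + L)) := by linarith
    calc (8 * (2:ℝ)^Z * k) * (4 * M + L)
        ≤ (8 * (2:ℝ)^Z * k) * (12 * ((Z:ℝ) + (lk + L))) := by
          apply mul_le_mul_of_nonneg_left hcoef; positivity
      _ = 96 * 2^Z * k * ((Z:ℝ) + (lk + L)) := by ring
  rw [hdiv]
  calc ∑ i ∈ Finset.Icc 1 M, (2:ℝ)^i * Real.logb 2 ((8:ℝ)^i * (2:ℝ)^i / δ)
      ≤ (∑ i ∈ Finset.Icc 1 M, (2:ℝ)^i) * (4 * M + L) := hstep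
    _ ≤ (8 * 2^Z * k) * (4 * M + L) := hkey
    _ ≤ 96 * 2^Z * k * ((Z:ℝ) + (lk + L)) := hfin
end

section
/- Let S be a finite set with |S| = n ≥ 2 and let L ≥ 0 be a real number. Let c_0, c_1, c_2, … : S → ℝ be a sequence of counter functions such that c_0(q) = L for all q ∈ S, and for each t there exist distinct elements a, b ∈ S whose counter values are the two largest values of c_t (i.e. c_t(q) ≤ min(c_t(a), c_t(b)) for all q ∉ {a,b}) such that c_{t+1} agrees with c_t outside {a, b}, c_{t+1}(b) = c_t(b) - 1, and c_{t+1}(a) ∈ {c_t(a) + 1/2, c_t(a) - 1}. Then there exists a time t ≤ 10(n+3)(L+3) at which at most one element q ∈ S has c_t(q) > -1, i.e. every element other than the one with maximal counter has counter value at most -1. -/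
/-- Deterministic potential claim for `MaxLex`: counters over a finite set `S`
of size `n ≥ 2` all start at `L ≥ 0`; at every step the two elements `a, b`
carrying the two largest counter values are selected, all other counters are
unchanged, the counter of `b` decreases by `1`, and the counter of `a` either
increases by `1/2` or decreases by `1`. Then within `10(n+3)(L+3)` steps there
is a time at which at most one element has a counter value above `-1`. -/
theorem maxLex_counter_bound
    {S : Type*} [Fintype S] (n : ℕ) (hcard : Fintype.card S = n) (hn : 2 ≤ n)
    (L : ℝ) (hL : 0 ≤ L)
    (c : ℕ → S → ℝ) (h0 : ∀ q, c 0 q = L)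
    (hstep : ∀ t, ∃ a b : S, a ≠ b ∧
      (∀ q, q ≠ a → q ≠ b → c t q ≤ min (c t a) (c t b)) ∧
      (∀ q, q ≠ a → q ≠ b → c (t + 1) q = c t q) ∧
      c (t + 1) b = c t b - 1 ∧
      (c (t + 1) a = c t a + 1 / 2 ∨ c (t + 1) a = c t a - 1)) :
    ∃ t : ℕ, (t : ℝ) ≤ 10 * ((n : ℝ) + 3) * (L + 3) ∧
      {q : S | -1 < c t q}.ncard ≤ 1 := by
  by_contra hcon
  push_neg at hcon
  have hnR : (2:ℝ) ≤ (n:ℝ) := by exact_mod_cast hn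
  set x : ℝ := 2 * (n:ℝ) * (L + 2) with hx
  have hx0 : 0 ≤ x := by positivity
  set T : ℕ := ⌈x⌉₊ + 1 with hT
  have hceil : x ≤ (⌈x⌉₊ : ℝ) := Nat.le_ceil x
  have hceil2 : (⌈x⌉₊ : ℝ) < x + 1 := Nat.ceil_lt_add_one hx0
  have hTle : (T:ℝ) ≤ 10 * ((n:ℝ) + 3) * (L + 3) := by
    have : (T:ℝ) = (⌈x⌉₊:ℝ) + 1 := by push_cast [hT]; ring
    rw [this]
    nlinarith [hceil2]
  -- all times up to T fail the stopping condition
  have hbig : ∀ t ≤ T, 1 < {q : S | -1 < c t q}.ncard := by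
    intro t ht
    refine hcon t (le_trans ?_ hTle)
    exact_mod_cast Nat.cast_le.mpr ht
  have htwo : ∀ t ≤ T, ∃ p q : S, p ≠ q ∧ -1 < c t p ∧ -1 < c t q := by
    intro t ht
    have := (Set.one_lt_ncard_iff (Set.toFinite _)).mp (hbig t ht)
    obtain ⟨p, q, hp, hq, hpq⟩ := this
    exact ⟨p, q, hpq, hp, hq⟩
  -- the two selected elements have counters above -1 (as long as we haven't stopped)
  have htop : ∀ t ≤ T, ∀ a b : S, a ≠ b →
      (∀ q, q ≠ a → q ≠ b → c t q ≤ min (c t a) (c t b)) →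
      -1 < c t a ∧ -1 < c t b := by
    intro t ht a b hab hmax
    obtain ⟨p, q, hpq, hp, hq⟩ := htwo t ht
    by_cases hpa : p = a
    · by_cases hqb : q = b
      · exact ⟨hpa ▸ hp, hqb ▸ hq⟩
      · by_cases hqa : q = a
        · exact absurd (hpa.trans hqa.symm) hpq
        · have := hmax q hqa hqb
          constructor
          · exact hpa ▸ hp
          · exact lt_of_lt_of_le hq (this.trans (min_le_right _ _))
    · by_cases hpb : p = b
      · by_cases hqa : q = a
        · exact ⟨hqa ▸ hq, hpb ▸ hp⟩
        · by_cases hqb : q = b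
          · exact absurd (hpb.trans hqb.symm) hpq
          · have := hmax q hqa hqb
            exact ⟨lt_of_lt_of_le hq (this.trans (min_le_left _ _)), hpb ▸ hp⟩
      · have := hmax p hpa hpb
        exact ⟨lt_of_lt_of_le hp (this.trans (min_le_left _ _)),
               lt_of_lt_of_le hp (this.trans (min_le_right _ _))⟩
  -- invariant: counters stay ≥ -2 up to time T
  have hlow : ∀ t ≤ T, ∀ q, -2 ≤ c t q := by
    intro t
    induction t with
    | zero => intro _ q; rw [h0 q]; linarith
    | succ t ih =>
      intro ht q
      have ht' : t ≤ T := Nat.le_of_succ_le ht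
      obtain ⟨a, b, hab, hmax, hother, hb, ha⟩ := hstep t
      obtain ⟨hca, hcb⟩ := htop t ht' a b hab hmax
      by_cases hqa : q = a
      · subst hqa
        rcases ha with h | h <;> rw [h] <;> linarith
      · by_cases hqb : q = b
        · subst hqb; rw [hb]; linarith
        · rw [hother q hqa hqb]; exact ih ht' q
  -- the total sum decreases by at least 1/2 each step
  have hsum : ∀ t, ∑ q, c (t+1) q ≤ (∑ q, c t q) - 1/2 := by
    intro t
    obtain ⟨a, b, hab, hmax, hother, hb, ha⟩ := hstep t
    have hdiff : ∑ q, (c (t+1) q - c t q) =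
        (c (t+1) a - c t a) + (c (t+1) b - c t b) := by
      refine Fintype.sum_eq_add a b hab ?_
      intro q ⟨hqa, hqb⟩
      rw [hother q hqa hqb]; ring
    have hsub : ∑ q, (c (t+1) q - c t q) = (∑ q, c (t+1) q) - ∑ q, c t q :=
      Finset.sum_sub_distrib _ _
    rcases ha with h | h <;>
      · rw [hsub] at hdiff
        rw [h, hb] at hdiff
        linarith
  have hsumT : ∀ t : ℕ, ∑ q, c t q ≤ (n:ℝ) * L - t / 2 := by
    intro t
    induction t with
    | zero =>
      simp only [h0, Finset.sum_const, Finset.card_univ, hcard, nsmul_eq_mul,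
        Nat.cast_zero]
      linarith
    | succ t ih =>
      have := hsum t
      push_cast
      linarith
  -- contradiction at time T
  have hlb : -2 * (n:ℝ) ≤ ∑ q, c T q := by
    have : ∑ _q : S, (-2 : ℝ) ≤ ∑ q, c T q :=
      Finset.sum_le_sum fun q _ => hlow T le_rfl q
    simpa [Finset.sum_const, Finset.card_univ, hcard, mul_comm] using this
  have hub := hsumT T
  have hTx : x + 1 ≤ (T:ℝ) := by
    have : (T:ℝ) = (⌈x⌉₊:ℝ) + 1 := by push_cast [hT]; ring
    linarith [hceil]
  rw [hx] at hTx
  nlinarith [hTx, hlb, hub]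
end
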